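/- Let $\Omega$ have finite measure, $1 < p < \infty$, and suppose $w_k \rightharpoonup w$ weakly in $L^p(\Omega; \mathbb{R}^n)$ and $g_k \to g$ almost everywhere with $0 \le g_k \le 1$. Then $\liminf_{k\to\infty} \int_\Omega g_k \frac{|w_k|^p}{p} \ge \int_\Omega g \frac{|w|^p}{p}$. -/

import Mathlib

open MeasureTheory Filter

variable {Ω : Type*} [MeasurableSpace Ω]

open scoped ENNReal NNReal


lemma aux_conj_ennreal {p q : ℝ} (hpq : p.HolderConjugate q) :
    (1 : ℝ≥0∞) / 1 = 1 / ENNReal.ofReal q + 1 / ENNReal.ofReal p := by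
  simp only [one_div, inv_one]
  rw [← ENNReal.ofReal_inv_of_pos hpq.symm.pos, ← ENNReal.ofReal_inv_of_pos hpq.pos,
    ← ENNReal.ofReal_add (le_of_lt (inv_pos.mpr hpq.symm.pos)) (le_of_lt (inv_pos.mpr hpq.pos)), hpq.symm.inv_add_inv_eq_one,
    ENNReal.ofReal_one]

lemma aux_memL1_mul_norm {α : Type*} [MeasurableSpace α] {μ : MeasureTheory.Measure α} {n : ℕ} {p q : ℝ} (hpq : p.HolderConjugate q)
    {f φ : α → EuclideanSpace ℝ (Fin n)}
    (hf : MemLp f (ENNReal.ofReal p) μ) (hφ : MemLp φ (ENNReal.ofReal q) μ) :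
    Integrable (fun x => ‖f x‖ * ‖φ x‖) μ := by
  haveI : ENNReal.HolderTriple (ENNReal.ofReal q) (ENNReal.ofReal p) 1 :=
    ⟨by rw [inv_one]; exact hpq.symm.inv_add_inv_ennreal⟩
  have hb := eLpNorm_le_eLpNorm_mul_eLpNorm'_of_norm (μ := μ) (p := ENNReal.ofReal q) (q := ENNReal.ofReal p) (r := 1) hφ.1 hf.1
      (fun a b => ‖b‖ * ‖a‖) 1
      (Filter.Eventually.of_forall fun x => by
        simp only [NNReal.coe_one, one_mul, norm_mul, norm_norm]
        exact (mul_comm _ _).le)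
  refine memLp_one_iff_integrable.mp ⟨hf.1.norm.mul hφ.1.norm, ?_⟩
  exact hb.trans_lt (ENNReal.mul_lt_top (ENNReal.mul_lt_top ENNReal.coe_lt_top hφ.2) hf.2)

lemma aux_memL1_inner {α : Type*} [MeasurableSpace α] {μ : MeasureTheory.Measure α} {n : ℕ} {p q : ℝ} (hpq : p.HolderConjugate q)
    {f φ : α → EuclideanSpace ℝ (Fin n)}
    (hf : MemLp f (ENNReal.ofReal p) μ) (hφ : MemLp φ (ENNReal.ofReal q) μ) :
    Integrable (fun x => (inner ℝ (f x) (φ x) : ℝ)) μ := by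
  haveI : ENNReal.HolderTriple (ENNReal.ofReal q) (ENNReal.ofReal p) 1 :=
    ⟨by rw [inv_one]; exact hpq.symm.inv_add_inv_ennreal⟩
  have hb := eLpNorm_le_eLpNorm_mul_eLpNorm'_of_norm (μ := μ) (p := ENNReal.ofReal q) (q := ENNReal.ofReal p) (r := 1) hφ.1 hf.1
      (fun a b => (inner ℝ b a : ℝ)) 1
      (Filter.Eventually.of_forall fun x => by
        simp only [NNReal.coe_one, one_mul]
        rw [mul_comm]
        exact norm_inner_le_norm _ _)
  refine memLp_one_iff_integrable.mp ⟨hf.1.inner hφ.1, ?_⟩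
  exact hb.trans_lt (ENNReal.mul_lt_top (ENNReal.mul_lt_top ENNReal.coe_lt_top hφ.2) hf.2)

lemma aux_holder {α : Type*} [MeasurableSpace α] {μ : MeasureTheory.Measure α} {n : ℕ} {p q : ℝ} (hpq : p.HolderConjugate q)
    {f φ : α → EuclideanSpace ℝ (Fin n)}
    (hf : MemLp f (ENNReal.ofReal p) μ) (hφ : MemLp φ (ENNReal.ofReal q) μ) :
    ‖∫ x, (inner ℝ (f x) (φ x) : ℝ) ∂μ‖ ≤
      (∫ x, ‖f x‖ ^ p ∂μ) ^ (1/p) * (∫ x, ‖φ x‖ ^ q ∂μ) ^ (1/q) := by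
  have h1 : ‖∫ x, (inner ℝ (f x) (φ x) : ℝ) ∂μ‖ ≤ ∫ x, ‖f x‖ * ‖φ x‖ ∂μ := by
    refine (norm_integral_le_integral_norm _).trans ?_
    refine integral_mono_of_nonneg (Filter.Eventually.of_forall fun x => norm_nonneg _)
      (aux_memL1_mul_norm hpq hf hφ)
      (Filter.Eventually.of_forall fun x => ?_)
    simpa using abs_real_inner_le_norm (f x) (φ x)
  exact h1.trans (integral_mul_norm_le_Lp_mul_Lq hpq hf hφ)


lemma aux_norm_dual {n : ℕ} {p : ℝ} (hp1 : 1 < p) (b : EuclideanSpace ℝ (Fin n)) :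
    ‖(‖b‖ ^ (p - 2) • b : EuclideanSpace ℝ (Fin n))‖ = ‖b‖ ^ (p - 1) := by
  rcases eq_or_ne b 0 with hb | hb
  · subst hb
    simp [Real.zero_rpow (show p - 1 ≠ 0 by intro h; linarith [sub_eq_zero.mp h])]
  · have hb' : (0:ℝ) < ‖b‖ := norm_pos_iff.mpr hb
    rw [norm_smul, Real.norm_eq_abs, abs_of_nonneg (Real.rpow_nonneg (norm_nonneg _) _),
      show p - 1 = (p - 2) + 1 by ring, Real.rpow_add hb', Real.rpow_one]

lemma aux_convexity {n : ℕ} {p q : ℝ} (hpq : p.HolderConjugate q)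
    (a b : EuclideanSpace ℝ (Fin n)) (t : ℝ) (ht0 : 0 ≤ t) :
    t * ‖b‖ ^ p / p + (inner ℝ a (t • (‖b‖ ^ (p - 2) • b)) : ℝ)
      - (inner ℝ b (t • (‖b‖ ^ (p - 2) • b)) : ℝ) ≤ t * ‖a‖ ^ p / p := by
  have hp0 : 0 < p := hpq.pos
  have key : ‖b‖ ^ p / p + (inner ℝ a (‖b‖ ^ (p - 2) • b) : ℝ)
      - (inner ℝ b (‖b‖ ^ (p - 2) • b) : ℝ) ≤ ‖a‖ ^ p / p := by
    rcases eq_or_ne b 0 with hb | hb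
    · subst hb
      simp only [smul_zero, inner_zero_right, norm_zero, Real.zero_rpow hp0.ne',
        zero_div, add_zero, sub_zero, zero_add, zero_sub, neg_zero]
      positivity
    · have hb' : (0:ℝ) < ‖b‖ := norm_pos_iff.mpr hb
      have e1 : (inner ℝ b (‖b‖ ^ (p - 2) • b) : ℝ) = ‖b‖ ^ p := by
        rw [real_inner_smul_right, real_inner_self_eq_norm_mul_norm,
          show p = (p - 2) + 1 + 1 by ring, Real.rpow_add hb', Real.rpow_add hb',
          Real.rpow_one]
        ring
      have e2 : (inner ℝ a (‖b‖ ^ (p - 2) • b) : ℝ) ≤ ‖b‖ ^ (p - 1) * ‖a‖ := by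
        rw [real_inner_smul_right]
        calc ‖b‖ ^ (p - 2) * (inner ℝ a b : ℝ) ≤ ‖b‖ ^ (p - 2) * (‖a‖ * ‖b‖) :=
              mul_le_mul_of_nonneg_left (real_inner_le_norm a b)
                (Real.rpow_nonneg (norm_nonneg _) _)
          _ = ‖b‖ ^ (p - 1) * ‖a‖ := by
              rw [show p - 1 = (p - 2) + 1 by ring, Real.rpow_add hb', Real.rpow_one]; ring
      have e3 : ‖b‖ ^ (p - 1) * ‖a‖ ≤ ‖a‖ ^ p / p + (‖b‖ ^ (p-1)) ^ q / q := by
        rw [mul_comm]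
        exact Real.young_inequality_of_nonneg (norm_nonneg a)
          (Real.rpow_nonneg (norm_nonneg b) _) hpq
      have e4 : (‖b‖ ^ (p-1)) ^ q = ‖b‖ ^ p := by
        rw [← Real.rpow_mul (norm_nonneg _), hpq.sub_one_mul_conj]
      have hqp : q + p = p * q := by
        have h := hpq.inv_add_inv_eq_one
        field_simp [hpq.pos.ne', hpq.symm.pos.ne'] at h
        linarith
      have e5 : ‖b‖ ^ p / p + ‖b‖ ^ p / q = ‖b‖ ^ p := by
        field_simp [hpq.pos.ne', hpq.symm.pos.ne']
        linear_combination hqp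
      rw [e1]
      rw [e4] at e3
      linarith
  calc t * ‖b‖ ^ p / p + (inner ℝ a (t • (‖b‖ ^ (p - 2) • b)) : ℝ)
      - (inner ℝ b (t • (‖b‖ ^ (p - 2) • b)) : ℝ)
      = t * (‖b‖ ^ p / p + (inner ℝ a (‖b‖ ^ (p - 2) • b) : ℝ)
          - (inner ℝ b (‖b‖ ^ (p - 2) • b) : ℝ)) := by
        simp only [real_inner_smul_right]; ring
    _ ≤ t * (‖a‖ ^ p / p) := mul_le_mul_of_nonneg_left key ht0
    _ = t * ‖a‖ ^ p / p := by ring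

lemma aux_inner_dual {n : ℕ} {p : ℝ} (hp1 : 1 < p) (b : EuclideanSpace ℝ (Fin n)) :
    (inner ℝ b (‖b‖ ^ (p - 2) • b) : ℝ) = ‖b‖ ^ p := by
  rcases eq_or_ne b 0 with hb | hb
  · subst hb; simp [Real.zero_rpow (show p ≠ 0 by linarith)]
  · have hb' : (0:ℝ) < ‖b‖ := norm_pos_iff.mpr hb
    rw [real_inner_smul_right, real_inner_self_eq_norm_mul_norm,
      show p = (p - 2) + 1 + 1 by ring, Real.rpow_add hb', Real.rpow_add hb', Real.rpow_one]
    ring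

lemma aux_memLq_dual {α : Type*} [MeasurableSpace α] {μ : Measure α} {n : ℕ} {p q : ℝ}
    (hpq : p.HolderConjugate q) {f : α → EuclideanSpace ℝ (Fin n)}
    (hf : MemLp f (ENNReal.ofReal p) μ) :
    MemLp (fun x => ‖f x‖ ^ (p - 2) • f x) (ENNReal.ofReal q) μ := by
  have hp1 := hpq.lt
  have h1 : MemLp (fun x => ‖f x‖ ^ (p - 1)) (ENNReal.ofReal q) μ := by
    have h2 := hf.norm_rpow_div (ENNReal.ofReal (p - 1))
    rw [ENNReal.toReal_ofReal (by linarith)] at h2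
    rwa [← ENNReal.ofReal_div_of_pos (by linarith), ← hpq.conjugate_eq] at h2
  refine h1.of_le ?_ ?_
  · exact ((hf.1.norm.aemeasurable.pow_const (p - 2)).aestronglyMeasurable).smul hf.1
  · refine Filter.Eventually.of_forall fun x => ?_
    rw [aux_norm_dual hp1, Real.norm_eq_abs,
      abs_of_nonneg (Real.rpow_nonneg (norm_nonneg _) _)]

lemma aux_bounded {α : Type*} [MeasurableSpace α] {μ : Measure α} {n : ℕ} {p q : ℝ}
    (hpq : p.HolderConjugate q)
    (w : ℕ → α → EuclideanSpace ℝ (Fin n)) (wlim : α → EuclideanSpace ℝ (Fin n))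
    (hwk : ∀ k, MemLp (w k) (ENNReal.ofReal p) μ)
    (hweak : ∀ φ : α → EuclideanSpace ℝ (Fin n), MemLp φ (ENNReal.ofReal q) μ →
      Tendsto (fun k => ∫ x, (inner ℝ (w k x) (φ x) : ℝ) ∂μ) atTop
        (nhds (∫ x, (inner ℝ (wlim x) (φ x) : ℝ) ∂μ))) :
    ∃ C : ℝ, 0 ≤ C ∧ ∀ k, (∫ x, ‖w k x‖ ^ p ∂μ) ^ (1/p) ≤ C := by
  have hp1 := hpq.lt
  have hq0 : 0 < q := hpq.symm.pos
  haveI : Fact (1 ≤ ENNReal.ofReal q) := ⟨by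
    rw [← ENNReal.ofReal_one]; exact ENNReal.ofReal_le_ofReal hpq.symm.lt.le⟩
  set q' : ℝ≥0∞ := ENNReal.ofReal q with hq'
  have hq'0 : q' ≠ 0 := ne_of_gt (ENNReal.ofReal_pos.mpr hq0)
  have hq'top : q' ≠ ⊤ := ENNReal.ofReal_ne_top
  have hq'real : q'.toReal = q := ENNReal.toReal_ofReal hq0.le
  -- norm formula on Lp
  have hnormφ : ∀ φ : Lp (EuclideanSpace ℝ (Fin n)) q' μ,
      ‖φ‖ = (∫ x, ‖φ x‖ ^ q ∂μ) ^ (1/q) := by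
    intro φ
    rw [Lp.norm_def, (Lp.memLp φ).eLpNorm_eq_integral_rpow_norm hq'0 hq'top, hq'real,
      ENNReal.toReal_ofReal (by positivity), one_div]
  -- the family of functionals
  set T : ℕ → Lp (EuclideanSpace ℝ (Fin n)) q' μ →L[ℝ] ℝ := fun k =>
    LinearMap.mkContinuous
      { toFun := fun φ => ∫ x, (inner ℝ (w k x) (φ x) : ℝ) ∂μ
        map_add' := by
          intro φ ψ
          rw [← integral_add (aux_memL1_inner hpq (hwk k) (Lp.memLp φ))
            (aux_memL1_inner hpq (hwk k) (Lp.memLp ψ))]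
          refine integral_congr_ae ?_
          filter_upwards [Lp.coeFn_add φ ψ] with x hx
          rw [hx]
          simp [inner_add_right]
        map_smul' := by
          intro c φ
          simp only [RingHom.id_apply]
          rw [← integral_smul]
          refine integral_congr_ae ?_
          filter_upwards [Lp.coeFn_smul c φ] with x hx
          rw [hx]
          simp [inner_smul_right] }
      ((∫ x, ‖w k x‖ ^ p ∂μ) ^ (1/p))
      (by
        intro φ
        simp only [LinearMap.coe_mk, AddHom.coe_mk]
        rw [hnormφ φ]
        exact aux_holder hpq (hwk k) (Lp.memLp φ)) with hT
  have hTapp : ∀ k φ, T k φ = ∫ x, (inner ℝ (w k x) (φ x) : ℝ) ∂μ := fun k φ => rfl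
  -- pointwise boundedness
  have hpt : ∀ φ : Lp (EuclideanSpace ℝ (Fin n)) q' μ, ∃ C : ℝ, ∀ k, ‖T k φ‖ ≤ C := by
    intro φ
    have ht := (hweak φ (Lp.memLp φ)).norm
    obtain ⟨C, hC⟩ := ht.bddAbove_range
    exact ⟨C, fun k => hC ⟨k, rfl⟩⟩
  obtain ⟨C', hC'⟩ := banach_steinhaus hpt
  have hC'0 : 0 ≤ C' := le_trans (norm_nonneg (T 0)) (hC' 0)
  refine ⟨C', hC'0, fun k => ?_⟩
  set X := ∫ x, ‖w k x‖ ^ p ∂μ with hX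
  have hX0 : 0 ≤ X := integral_nonneg fun x => Real.rpow_nonneg (norm_nonneg _) _
  set N := X ^ (1/p) with hN
  have hN0 : 0 ≤ N := Real.rpow_nonneg hX0 _
  rcases eq_or_lt_of_le hN0 with h0 | hNpos
  · rw [← h0]; exact hC'0
  · -- test with the duality element
    have hψ : MemLp (fun x => ‖w k x‖ ^ (p - 2) • w k x) q' μ := aux_memLq_dual hpq (hwk k)
    set φ0 := hψ.toLp _ with hφ0
    have e1 : T k φ0 = X := by
      rw [hTapp]
      rw [show X = ∫ x, (inner ℝ (w k x) (‖w k x‖ ^ (p-2) • w k x) : ℝ) ∂μ from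
        integral_congr_ae (Filter.Eventually.of_forall fun x => (aux_inner_dual hp1 _).symm)]
      refine integral_congr_ae ?_
      filter_upwards [hψ.coeFn_toLp] with x hx
      rw [hx]
    have e2 : ‖φ0‖ = X ^ (1/q) := by
      rw [hnormφ φ0]
      congr 1
      refine integral_congr_ae ?_
      filter_upwards [hψ.coeFn_toLp] with x hx
      rw [hx, aux_norm_dual hp1, ← Real.rpow_mul (norm_nonneg _), hpq.sub_one_mul_conj]
    have hp0 : p ≠ 0 := by positivity
    have e3 : X = N ^ p := by
      rw [hN, one_div, Real.rpow_inv_rpow hX0 hp0]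
    have hpq1 : p * (1/q) = p - 1 := by
      rw [hpq.conjugate_eq]
      field_simp
    have e4 : ‖φ0‖ = N ^ (p - 1) := by
      rw [e2, e3, ← Real.rpow_mul hN0, hpq1]
    have e5 : X ≤ C' * N ^ (p - 1) := by
      calc X = T k φ0 := e1.symm
        _ ≤ ‖T k φ0‖ := le_abs_self _
        _ ≤ ‖T k‖ * ‖φ0‖ := (T k).le_opNorm φ0
        _ ≤ C' * ‖φ0‖ := by
            apply mul_le_mul_of_nonneg_right (hC' k) (norm_nonneg _)
        _ = C' * N ^ (p - 1) := by rw [e4]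
    have e6 : N ^ (p - 1) * N ≤ N ^ (p - 1) * C' := by
      calc N ^ (p - 1) * N = N ^ ((p - 1) + 1) := by
            rw [Real.rpow_add hNpos, Real.rpow_one]
        _ = N ^ p := by norm_num
        _ = X := e3.symm
        _ ≤ C' * N ^ (p - 1) := e5
        _ = N ^ (p - 1) * C' := mul_comm _ _
    exact le_of_mul_le_mul_left e6 (Real.rpow_pos_of_pos hNpos _)



/-- `u k ⇀ ul` weakly in `L^p(Ω; ℝⁿ)`. -/
def WeakLpTendsto {n : ℕ} (μ : Measure Ω) (p : ℝ)
    (u : ℕ → Ω → EuclideanSpace ℝ (Fin n)) (ul : Ω → EuclideanSpace ℝ (Fin n)) : Prop :=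
  ∀ φ : Ω → EuclideanSpace ℝ (Fin n), MemLp φ (ENNReal.ofReal (p / (p - 1))) μ →
    Tendsto (fun k => ∫ x, (inner ℝ (u k x) (φ x) : ℝ) ∂μ) atTop
      (nhds (∫ x, (inner ℝ (ul x) (φ x) : ℝ) ∂μ))

/-- Weak lower semicontinuity of the weighted Norton–Hoff energy: if `w_k ⇀ w`
weakly in `L^p` and `g_k → g` a.e. with `0 ≤ g_k ≤ 1`, then
`liminf ∫ g_k |w_k|^p / p ≥ ∫ g |w|^p / p`. -/
theorem stmt9 (n : ℕ) (p : ℝ) (hp1 : 1 < p)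
    (μ : Measure Ω) [IsFiniteMeasure μ]
    (w : ℕ → Ω → EuclideanSpace ℝ (Fin n)) (wlim : Ω → EuclideanSpace ℝ (Fin n))
    (hwk : ∀ k, MemLp (w k) (ENNReal.ofReal p) μ) (hwl : MemLp wlim (ENNReal.ofReal p) μ)
    (hweak : WeakLpTendsto μ p w wlim)
    (g : ℕ → Ω → ℝ) (glim : Ω → ℝ) (hgm : ∀ k, Measurable (g k))
    (hg01 : ∀ k x, g k x ∈ Set.Icc (0:ℝ) 1)
    (hgae : ∀ᵐ x ∂μ, Tendsto (fun k => g k x) atTop (nhds (glim x))) :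
    (∫ x, glim x * ‖wlim x‖ ^ p / p ∂μ) ≤
      Filter.liminf (fun k => ∫ x, g k x * ‖w k x‖ ^ p / p ∂μ) atTop := by
  
  set q : ℝ := p / (p - 1) with hqdef
  have hpq : p.HolderConjugate q := (Real.holderConjugate_iff_eq_conjExponent hp1).mpr hqdef
  have hp0 : (0:ℝ) < p := hpq.pos
  have hq0 : (0:ℝ) < q := hpq.symm.pos
  have hweak' : ∀ φ : Ω → EuclideanSpace ℝ (Fin n), MemLp φ (ENNReal.ofReal q) μ →
      Tendsto (fun k => ∫ x, (inner ℝ (w k x) (φ x) : ℝ) ∂μ) atTop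
        (nhds (∫ x, (inner ℝ (wlim x) (φ x) : ℝ) ∂μ)) := hweak
  obtain ⟨C, hC0, hC⟩ := aux_bounded hpq w wlim hwk hweak'
  -- properties of glim
  have hglim01 : ∀ᵐ x ∂μ, glim x ∈ Set.Icc (0:ℝ) 1 := by
    filter_upwards [hgae] with x hx
    exact isClosed_Icc.mem_of_tendsto hx (Eventually.of_forall fun k => hg01 k x)
  have hglim_meas : AEMeasurable glim μ :=
    aemeasurable_of_tendsto_metrizable_ae' (fun k => (hgm k).aemeasurable) hgae
  -- the duality map m
  set m : Ω → EuclideanSpace ℝ (Fin n) := fun x => ‖wlim x‖ ^ (p - 2) • wlim x with hm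
  have hmq : MemLp m (ENNReal.ofReal q) μ := aux_memLq_dual hpq hwl
  have hm_inner : ∀ x, (inner ℝ (wlim x) (m x) : ℝ) = ‖wlim x‖ ^ p := fun x => by
    simp only [hm]; exact aux_inner_dual hp1 _
  have hm_norm : ∀ x, ‖m x‖ = ‖wlim x‖ ^ (p - 1) := fun x => by
    simp only [hm]; exact aux_norm_dual hp1 _
  have hW : Integrable (fun x => ‖wlim x‖ ^ p) μ := by
    have h := hwl.norm_rpow (by simp [ENNReal.ofReal_eq_zero]; linarith) ENNReal.ofReal_ne_top
    rw [ENNReal.toReal_ofReal hp0.le] at h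
    exact memLp_one_iff_integrable.mp h
  have hWk : ∀ k, Integrable (fun x => ‖w k x‖ ^ p) μ := by
    intro k
    have h := (hwk k).norm_rpow (by simp [ENNReal.ofReal_eq_zero]; linarith) ENNReal.ofReal_ne_top
    rw [ENNReal.toReal_ofReal hp0.le] at h
    exact memLp_one_iff_integrable.mp h
  -- weighted test functions
  have hgm_mem : ∀ (h : Ω → ℝ), AEMeasurable h μ → (∀ᵐ x ∂μ, |h x| ≤ 1) →
      MemLp (fun x => h x • m x) (ENNReal.ofReal q) μ := by
    intro h hmeas hbd
    refine hmq.of_le (hmeas.aestronglyMeasurable.smul hmq.1) ?_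
    filter_upwards [hbd] with x hx
    rw [norm_smul, Real.norm_eq_abs]
    exact mul_le_of_le_one_left (norm_nonneg _) hx
  have hφg : ∀ k, MemLp (fun x => g k x • m x) (ENNReal.ofReal q) μ := fun k =>
    hgm_mem _ (hgm k).aemeasurable (Eventually.of_forall fun x => by
      rcases hg01 k x with ⟨h0, h1⟩; rw [abs_of_nonneg h0]; exact h1)
  have hφlim : MemLp (fun x => glim x • m x) (ENNReal.ofReal q) μ :=
    hgm_mem _ hglim_meas (by
      filter_upwards [hglim01] with x hx; rw [abs_of_nonneg hx.1]; exact hx.2)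
  have hφdiff : ∀ k, MemLp (fun x => (g k x - glim x) • m x) (ENNReal.ofReal q) μ := fun k =>
    hgm_mem _ ((hgm k).aemeasurable.sub hglim_meas) (by
      filter_upwards [hglim01] with x hx
      rcases hg01 k x with ⟨h0, h1⟩
      rw [abs_le]; constructor <;> [linarith [hx.2]; linarith [hx.1]])
  -- integrability of weighted energies
  have hInt_weight : ∀ (h : Ω → ℝ), AEMeasurable h μ → (∀ᵐ x ∂μ, |h x| ≤ 1) →
      ∀ (v : Ω → EuclideanSpace ℝ (Fin n)), Integrable (fun x => ‖v x‖ ^ p) μ →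
      AEStronglyMeasurable v μ → Integrable (fun x => h x * ‖v x‖ ^ p / p) μ := by
    intro h hmeas hbd v hv hvm
    refine (hv.div_const p).mono'
      (((hmeas.mul (hvm.norm.aemeasurable.pow_const p)).div_const p).aestronglyMeasurable) ?_
    filter_upwards [hbd] with x hx
    rw [Real.norm_eq_abs, abs_div, abs_mul,
      abs_of_nonneg (Real.rpow_nonneg (norm_nonneg _) _), abs_of_pos hp0]
    gcongr
    exact mul_le_of_le_one_left (Real.rpow_nonneg (norm_nonneg _) _) hx
  have hg_abs : ∀ k, ∀ᵐ x ∂μ, |g k x| ≤ 1 := fun k => Eventually.of_forall fun x => by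
    rcases hg01 k x with ⟨h0, h1⟩; rw [abs_of_nonneg h0]; exact h1
  have hint1 : ∀ k, Integrable (fun x => g k x * ‖wlim x‖ ^ p / p) μ := fun k =>
    hInt_weight _ (hgm k).aemeasurable (hg_abs k) _ hW hwl.1
  have hint4 : ∀ k, Integrable (fun x => g k x * ‖w k x‖ ^ p / p) μ := fun k =>
    hInt_weight _ (hgm k).aemeasurable (hg_abs k) _ (hWk k) (hwk k).1
  -- the key convexity estimate
  have key : ∀ k, (∫ x, g k x * ‖wlim x‖ ^ p / p ∂μ)
      + (∫ x, (inner ℝ (w k x) (g k x • m x) : ℝ) ∂μ)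
      - (∫ x, (inner ℝ (wlim x) (g k x • m x) : ℝ) ∂μ)
      ≤ ∫ x, g k x * ‖w k x‖ ^ p / p ∂μ := by
    intro k
    have hint2 := aux_memL1_inner hpq (hwk k) (hφg k)
    have hint3 := aux_memL1_inner hpq hwl (hφg k)
    have e : (∫ x, g k x * ‖wlim x‖ ^ p / p ∂μ)
        + (∫ x, (inner ℝ (w k x) (g k x • m x) : ℝ) ∂μ)
        - (∫ x, (inner ℝ (wlim x) (g k x • m x) : ℝ) ∂μ)
        = ∫ x, (g k x * ‖wlim x‖ ^ p / p + (inner ℝ (w k x) (g k x • m x) : ℝ)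
            - (inner ℝ (wlim x) (g k x • m x) : ℝ)) ∂μ := by
      have hadd : Integrable (fun x => g k x * ‖wlim x‖ ^ p / p
          + (inner ℝ (w k x) (g k x • m x) : ℝ)) μ := (hint1 k).add hint2
      rw [integral_sub hadd hint3, integral_add (hint1 k) hint2]
    rw [e]
    have hcomb : Integrable (fun x => g k x * ‖wlim x‖ ^ p / p
        + (inner ℝ (w k x) (g k x • m x) : ℝ) - (inner ℝ (wlim x) (g k x • m x) : ℝ)) μ :=
      ((hint1 k).add hint2).sub hint3
    refine integral_mono_ae hcomb (hint4 k) (Eventually.of_forall fun x => ?_)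
    exact aux_convexity hpq (w k x) (wlim x) (g k x) (hg01 k x).1
  -- limit of A
  have limA : Tendsto (fun k => ∫ x, g k x * ‖wlim x‖ ^ p / p ∂μ) atTop
      (nhds (∫ x, glim x * ‖wlim x‖ ^ p / p ∂μ)) := by
    refine tendsto_integral_of_dominated_convergence (fun x => ‖wlim x‖ ^ p / p)
      (fun k => (hint1 k).1) (hW.div_const p) (fun k => ?_) ?_
    · refine Eventually.of_forall fun x => ?_
      rcases hg01 k x with ⟨h0, h1⟩
      rw [Real.norm_eq_abs, abs_div, abs_mul,
        abs_of_nonneg (Real.rpow_nonneg (norm_nonneg _) _), abs_of_pos hp0, abs_of_nonneg h0]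
      exact div_le_div_of_nonneg_right (mul_le_of_le_one_left
        (Real.rpow_nonneg (norm_nonneg _) _) h1) hp0.le
    · filter_upwards [hgae] with x hx
      exact (hx.mul_const _).div_const _
  -- limit of D
  have limD : Tendsto (fun k => ∫ x, (inner ℝ (wlim x) (g k x • m x) : ℝ) ∂μ) atTop
      (nhds (∫ x, (inner ℝ (wlim x) (glim x • m x) : ℝ) ∂μ)) := by
    refine tendsto_integral_of_dominated_convergence (fun x => ‖wlim x‖ ^ p)
      (fun k => (aux_memL1_inner hpq hwl (hφg k)).1) hW (fun k => ?_) ?_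
    · refine Eventually.of_forall fun x => ?_
      rcases hg01 k x with ⟨h0, h1⟩
      rw [real_inner_smul_right, Real.norm_eq_abs, abs_mul, abs_of_nonneg h0]
      calc g k x * |(inner ℝ (wlim x) (m x) : ℝ)| ≤ 1 * |(inner ℝ (wlim x) (m x) : ℝ)| :=
            mul_le_mul_of_nonneg_right h1 (abs_nonneg _)
        _ = |(inner ℝ (wlim x) (m x) : ℝ)| := one_mul _
        _ = ‖wlim x‖ ^ p := by
            rw [hm_inner x, abs_of_nonneg (Real.rpow_nonneg (norm_nonneg _) _)]
    · filter_upwards [hgae] with x hx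
      simp only [real_inner_smul_right]
      exact hx.mul_const _
  -- limit of B
  have hsplit : ∀ k, (∫ x, (inner ℝ (w k x) (g k x • m x) : ℝ) ∂μ)
      = (∫ x, (inner ℝ (w k x) (glim x • m x) : ℝ) ∂μ)
      + ∫ x, (inner ℝ (w k x) ((g k x - glim x) • m x) : ℝ) ∂μ := by
    intro k
    rw [← integral_add (aux_memL1_inner hpq (hwk k) hφlim)
      (aux_memL1_inner hpq (hwk k) (hφdiff k))]
    refine integral_congr_ae (Eventually.of_forall fun x => ?_)
    simp only [real_inner_smul_right]
    ring
  have hzero : Tendsto (fun k => ∫ x, (inner ℝ (w k x) ((g k x - glim x) • m x) : ℝ) ∂μ)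
      atTop (nhds 0) := by
    have hIk : Tendsto (fun k => ∫ x, |g k x - glim x| ^ q * ‖wlim x‖ ^ p ∂μ)
        atTop (nhds 0) := by
      have h0 : (0:ℝ) = ∫ (_ : Ω), (0:ℝ) ∂μ := by simp
      rw [h0]
      refine tendsto_integral_of_dominated_convergence (fun x => ‖wlim x‖ ^ p)
        (fun k => ((((continuous_abs.measurable.comp_aemeasurable
            ((hgm k).aemeasurable.sub hglim_meas)).pow_const q).mul
          (hwl.1.norm.aemeasurable.pow_const p)).aestronglyMeasurable)) hW (fun k => ?_) ?_
      · filter_upwards [hglim01] with x hx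
        rcases hg01 k x with ⟨h0', h1'⟩
        have habs : |g k x - glim x| ≤ 1 := by
          rw [abs_le]; constructor <;> [linarith [hx.2]; linarith [hx.1]]
        rw [Real.norm_eq_abs, abs_mul, abs_of_nonneg (Real.rpow_nonneg (abs_nonneg _) _),
          abs_of_nonneg (Real.rpow_nonneg (norm_nonneg _) _)]
        calc |g k x - glim x| ^ q * ‖wlim x‖ ^ p ≤ 1 * ‖wlim x‖ ^ p := by
              gcongr
              · exact Real.rpow_le_one (abs_nonneg _) habs hq0.le
          _ = ‖wlim x‖ ^ p := one_mul _
      · filter_upwards [hgae] with x hx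
        have h1 : Tendsto (fun k => g k x - glim x) atTop (nhds 0) := by
          simpa using hx.sub_const (glim x)
        have h2 : Tendsto (fun k => |g k x - glim x|) atTop (nhds 0) := by
          simpa using h1.abs
        have h3 : Tendsto (fun k => |g k x - glim x| ^ q) atTop (nhds 0) := by
          have hc := (Real.continuousAt_rpow_const 0 q (Or.inr hq0.le)).tendsto.comp h2
          rw [Real.zero_rpow hq0.ne'] at hc
          exact hc
        simpa using h3.mul_const (‖wlim x‖ ^ p)
    have hε : Tendsto (fun k => (∫ x, |g k x - glim x| ^ q * ‖wlim x‖ ^ p ∂μ) ^ (1/q))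
        atTop (nhds 0) := by
      have hc := (Real.continuousAt_rpow_const 0 (1/q) (Or.inr (by positivity))).tendsto.comp hIk
      rw [Real.zero_rpow (show (1:ℝ)/q ≠ 0 by positivity)] at hc
      exact hc
    have hCε : Tendsto (fun k => C * (∫ x, |g k x - glim x| ^ q * ‖wlim x‖ ^ p ∂μ) ^ (1/q))
        atTop (nhds 0) := by
      have := hε.const_mul C
      rwa [mul_zero] at this
    refine squeeze_zero_norm (fun k => ?_) hCε
    -- ‖∫ ⟪w k, diff • m⟫‖ ≤ C * ε k
    have hH := aux_holder hpq (hwk k) (hφdiff k)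
    have heq : (∫ x, ‖(g k x - glim x) • m x‖ ^ q ∂μ)
        = ∫ x, |g k x - glim x| ^ q * ‖wlim x‖ ^ p ∂μ := by
      refine integral_congr_ae (Eventually.of_forall fun x => ?_)
      show ‖(g k x - glim x) • m x‖ ^ q = |g k x - glim x| ^ q * ‖wlim x‖ ^ p
      rw [norm_smul, Real.norm_eq_abs, Real.mul_rpow (abs_nonneg _) (norm_nonneg _),
        hm_norm x, ← Real.rpow_mul (norm_nonneg _), hpq.sub_one_mul_conj]
    rw [heq] at hH
    exact hH.trans (mul_le_mul_of_nonneg_right (hC k)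
      (Real.rpow_nonneg (integral_nonneg fun x => by positivity) _))
  have limB : Tendsto (fun k => ∫ x, (inner ℝ (w k x) (g k x • m x) : ℝ) ∂μ) atTop
      (nhds (∫ x, (inner ℝ (wlim x) (glim x • m x) : ℝ) ∂μ)) := by
    have h := (hweak' _ hφlim).add hzero
    rw [add_zero] at h
    exact h.congr fun k => (hsplit k).symm
  -- conclusion
  have hbk : Tendsto (fun k => (∫ x, g k x * ‖wlim x‖ ^ p / p ∂μ)
      + (∫ x, (inner ℝ (w k x) (g k x • m x) : ℝ) ∂μ)
      - (∫ x, (inner ℝ (wlim x) (g k x • m x) : ℝ) ∂μ)) atTop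
      (nhds (∫ x, glim x * ‖wlim x‖ ^ p / p ∂μ)) := by
    have h := (limA.add limB).sub limD
    rwa [add_sub_cancel_right] at h
  rw [← hbk.liminf_eq]
  refine liminf_le_liminf (Eventually.of_forall key) ?_ ?_
  · exact hbk.isBoundedUnder_ge
  · refine isCoboundedUnder_ge_of_le atTop (x := C ^ p / p) fun k => ?_
    have h1 : (∫ x, g k x * ‖w k x‖ ^ p / p ∂μ) ≤ ∫ x, ‖w k x‖ ^ p / p ∂μ := by
      refine integral_mono_ae (hint4 k) ((hWk k).div_const p)
        (Eventually.of_forall fun x => ?_)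
      exact div_le_div_of_nonneg_right (mul_le_of_le_one_left
        (Real.rpow_nonneg (norm_nonneg _) _) (hg01 k x).2) hp0.le
    have h2 : (∫ x, ‖w k x‖ ^ p ∂μ) ≤ C ^ p := by
      have hX0 : (0:ℝ) ≤ ∫ x, ‖w k x‖ ^ p ∂μ := integral_nonneg fun x => by positivity
      have := Real.rpow_le_rpow (Real.rpow_nonneg hX0 _) (hC k) hp0.le
      rwa [one_div, Real.rpow_inv_rpow hX0 hp0.ne'] at this
    calc (∫ x, g k x * ‖w k x‖ ^ p / p ∂μ) ≤ ∫ x, ‖w k x‖ ^ p / p ∂μ := h1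
      _ = (∫ x, ‖w k x‖ ^ p ∂μ) / p := integral_div p _
      _ ≤ C ^ p / p := by gcongr
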